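/- Let f be a real-valued function differentiable on an interval [a,b] not containing 0 (i.e., a ≤ b and 0 ∉ [a,b]). Then for every pair of points x₁, x₂ ∈ [a,b] with x₁ ≠ x₂, there exists a point ξ strictly between x₁ and x₂ such that (x₁·f(x₂) − x₂·f(x₁))/(x₁ − x₂) = f(ξ) − ξ·f′(ξ). -/

import Mathlib

open Set

/-- Pompeiu's mean value theorem. -/
theorem pompeiu_mean_value_theorem (a b : ℝ) (f : ℝ → ℝ)
    (hab : a ≤ b) (h0 : (0:ℝ) ∉ Set.Icc a b)
    (hf : DifferentiableOn ℝ f (Set.Icc a b))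
    (x₁ x₂ : ℝ) (hx₁ : x₁ ∈ Set.Icc a b) (hx₂ : x₂ ∈ Set.Icc a b) (hne : x₁ ≠ x₂) :
    ∃ ξ ∈ Set.Ioo (min x₁ x₂) (max x₁ x₂),
      (x₁ * f x₂ - x₂ * f x₁) / (x₁ - x₂) =
        f ξ - ξ * derivWithin f (Set.Icc a b) ξ := by
  have hne0 : ∀ t ∈ Set.Icc a b, t ≠ 0 := fun t ht h => h0 (h ▸ ht)
  set c := min x₁ x₂ with hc
  set d := max x₁ x₂ with hd
  have hcd : c < d := min_lt_max.2 hne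
  have hcm : c ∈ Set.Icc a b := ⟨le_min hx₁.1 hx₂.1, (min_le_left _ _).trans hx₁.2⟩
  have hdm : d ∈ Set.Icc a b := ⟨hx₁.1.trans (le_max_left _ _), max_le hx₁.2 hx₂.2⟩
  have hsub : Set.Icc c d ⊆ Set.Icc a b := Set.Icc_subset_Icc hcm.1 hdm.2
  have hIoo : Set.Ioo c d ⊆ Set.Ioo a b := Set.Ioo_subset_Ioo hcm.1 hdm.2
  -- derivatives at interior points
  have hder : ∀ x ∈ Set.Ioo c d, HasDerivAt f (deriv f x) x := by
    intro x hx
    have hx' := hIoo hx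
    have hnb : Set.Icc a b ∈ nhds x := Icc_mem_nhds hx'.1 hx'.2
    exact ((hf x (Set.Ioo_subset_Icc_self hx')).differentiableAt hnb).hasDerivAt
  set F : ℝ → ℝ := fun t => f t * t⁻¹ with hF
  set G : ℝ → ℝ := fun t => t⁻¹ with hG
  set F' : ℝ → ℝ := fun t => deriv f t * t⁻¹ + f t * (-(t ^ 2)⁻¹) with hF'
  set G' : ℝ → ℝ := fun t => -(t ^ 2)⁻¹ with hG'
  have hFc : ContinuousOn F (Set.Icc c d) := by
    apply ContinuousOn.mul ((hf.continuousOn.mono hsub))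
    exact ContinuousOn.inv₀ continuousOn_id (fun t ht => hne0 t (hsub ht))
  have hGc : ContinuousOn G (Set.Icc c d) :=
    ContinuousOn.inv₀ continuousOn_id (fun t ht => hne0 t (hsub ht))
  have hFd : ∀ x ∈ Set.Ioo c d, HasDerivAt F (F' x) x := by
    intro x hx
    exact (hder x hx).mul (hasDerivAt_inv (hne0 x (hsub (Set.Ioo_subset_Icc_self hx))))
  have hGd : ∀ x ∈ Set.Ioo c d, HasDerivAt G (G' x) x := by
    intro x hx
    exact hasDerivAt_inv (hne0 x (hsub (Set.Ioo_subset_Icc_self hx)))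
  obtain ⟨ξ, hξ, key⟩ := exists_ratio_hasDerivAt_eq_ratio_slope F F' hcd hFc hFd G G' hGc hGd
  refine ⟨ξ, hξ, ?_⟩
  have hξab : ξ ∈ Set.Ioo a b := hIoo hξ
  have hdw : derivWithin f (Set.Icc a b) ξ = deriv f ξ :=
    derivWithin_of_mem_nhds (Icc_mem_nhds hξab.1 hξab.2)
  rw [hdw]
  have hξ0 : ξ ≠ 0 := hne0 ξ (hsub (Set.Ioo_subset_Icc_self hξ))
  have hc0 : c ≠ 0 := hne0 c hcm
  have hd0 : d ≠ 0 := hne0 d hdm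
  have hcd' : c - d ≠ 0 := sub_ne_zero.2 hcd.ne
  -- target is symmetric in x₁ ↔ x₂; reduce to c, d
  have hsym : (x₁ * f x₂ - x₂ * f x₁) / (x₁ - x₂) = (c * f d - d * f c) / (c - d) := by
    rcases le_or_gt x₁ x₂ with h | h
    · rw [hc, hd, min_eq_left h, max_eq_right h]
    · rw [hc, hd, min_eq_right h.le, max_eq_left h.le,
        div_eq_div_iff (sub_ne_zero.2 hne) (sub_ne_zero.2 (Ne.symm hne))]
      ring
  rw [hsym, div_eq_iff hcd']
  simp only [hF, hF', hG, hG'] at key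
  field_simp at key
  have hnz : d * c * ξ ^ 3 ≠ 0 := by
    apply mul_ne_zero (mul_ne_zero hd0 hc0) (pow_ne_zero 3 hξ0)
  have key2 : ((f ξ - ξ * deriv f ξ) * (c - d)) * (d * c * ξ ^ 3)
      = (c * f d - d * f c) * (d * c * ξ ^ 3) := by linear_combination (-(d * c * ξ ^ 3)) * key
  have key3 := mul_right_cancel₀ hnz key2
  linarith [key3]
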